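/- Let H : CPO → CPO be locally continuous and α : HA → A an H-algebra with least element. Then (A, α) with the assignment of least solutions is a complete Elgot algebra: the least-solution assignment is functorial (for every morphism of equations h : e → f we have e† = f† ∘ h) and compositional ((f† ▹ e)† = (f ⊞ e)† ∘ inl). -/

import Mathlib

open OmegaCompletePartialOrder

namespace CPOSum

variable {α β : Type} [OmegaCompletePartialOrder α] [OmegaCompletePartialOrder β]

theorem exists_inl (c : Chain (α ⊕ β)) (a₀ : α) (h : c 0 = Sum.inl a₀) (n : ℕ) :
    ∃ a, c n = Sum.inl a := by
  have h0 : c 0 ≤ c n := c.monotone (Nat.zero_le n)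
  rw [h] at h0
  cases hn : c n with
  | inl a => exact ⟨a, rfl⟩
  | inr b => rw [hn] at h0; exact absurd h0 Sum.not_inl_le_inr

theorem exists_inr (c : Chain (α ⊕ β)) (b₀ : β) (h : c 0 = Sum.inr b₀) (n : ℕ) :
    ∃ b, c n = Sum.inr b := by
  have h0 : c 0 ≤ c n := c.monotone (Nat.zero_le n)
  rw [h] at h0
  cases hn : c n with
  | inl a => rw [hn] at h0; exact absurd h0 Sum.not_inr_le_inl
  | inr b => exact ⟨b, rfl⟩

/-- The left component of a chain in `α ⊕ β` starting in `α`. -/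
def leftChain (c : Chain (α ⊕ β)) (a₀ : α) (h : c 0 = Sum.inl a₀) : Chain α where
  toFun n := ((c n).getLeft?).getD a₀
  monotone' := by
    intro m n hmn
    obtain ⟨a, ha⟩ := exists_inl c a₀ h m
    obtain ⟨b, hb⟩ := exists_inl c a₀ h n
    have hc : c m ≤ c n := c.monotone hmn
    rw [ha, hb] at hc
    simp [ha, hb, Sum.getLeft?]
    exact Sum.inl_le_inl_iff.mp hc

/-- The right component of a chain in `α ⊕ β` starting in `β`. -/
def rightChain (c : Chain (α ⊕ β)) (b₀ : β) (h : c 0 = Sum.inr b₀) : Chain β where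
  toFun n := ((c n).getRight?).getD b₀
  monotone' := by
    intro m n hmn
    obtain ⟨a, ha⟩ := exists_inr c b₀ h m
    obtain ⟨b, hb⟩ := exists_inr c b₀ h n
    have hc : c m ≤ c n := c.monotone hmn
    rw [ha, hb] at hc
    simp [ha, hb, Sum.getRight?]
    exact Sum.inr_le_inr_iff.mp hc

theorem leftChain_apply (c : Chain (α ⊕ β)) (a₀ : α) (h : c 0 = Sum.inl a₀)
    {i : ℕ} {a : α} (ha : c i = Sum.inl a) : leftChain c a₀ h i = a := by
  show ((c i).getLeft?).getD a₀ = a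
  rw [ha]
  rfl

theorem rightChain_apply (c : Chain (α ⊕ β)) (b₀ : β) (h : c 0 = Sum.inr b₀)
    {i : ℕ} {b : β} (hb : c i = Sum.inr b) : rightChain c b₀ h i = b := by
  show ((c i).getRight?).getD b₀ = b
  rw [hb]
  rfl

/-- The `ω`-complete partial order on the disjoint union `α ⊕ β`, with elements
of different summands incomparable (the coproduct in `CPO`): an `ω`-chain lies
entirely in one summand, and its supremum is computed there. -/
noncomputable instance instSumCPO : OmegaCompletePartialOrder (α ⊕ β) where
  ωSup c :=
    match h : c 0 with
    | Sum.inl a₀ => Sum.inl (ωSup (leftChain c a₀ h))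
    | Sum.inr b₀ => Sum.inr (ωSup (rightChain c b₀ h))
  le_ωSup := by
    intro c i
    try dsimp only
    split
    · rename_i a₀ h
      obtain ⟨a, ha⟩ := exists_inl c a₀ h i
      have hle := le_ωSup (leftChain c a₀ h) i
      rw [leftChain_apply c a₀ h ha] at hle
      rw [ha]
      exact Sum.inl_le_inl_iff.mpr hle
    · rename_i b₀ h
      obtain ⟨b, hb⟩ := exists_inr c b₀ h i
      have hle := le_ωSup (rightChain c b₀ h) i
      rw [rightChain_apply c b₀ h hb] at hle
      rw [hb]
      exact Sum.inr_le_inr_iff.mpr hle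
  ωSup_le := by
    intro c x hx
    try dsimp only
    split
    · rename_i a₀ h
      rcases x with ax | bx
      · refine Sum.inl_le_inl_iff.mpr (ωSup_le _ _ ?_)
        intro i
        obtain ⟨a, ha⟩ := exists_inl c a₀ h i
        have hi := hx i
        rw [ha] at hi
        rw [leftChain_apply c a₀ h ha]
        exact Sum.inl_le_inl_iff.mp hi
      · have h0 := hx 0
        rw [h] at h0
        exact absurd h0 Sum.not_inl_le_inr
    · rename_i b₀ h
      rcases x with ax | bx
      · have h0 := hx 0
        rw [h] at h0
        exact absurd h0 Sum.not_inr_le_inl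
      · refine Sum.inr_le_inr_iff.mpr (ωSup_le _ _ ?_)
        intro i
        obtain ⟨b, hb⟩ := exists_inr c b₀ h i
        have hi := hx i
        rw [hb] at hi
        rw [rightChain_apply c b₀ h hb]
        exact Sum.inr_le_inr_iff.mp hi

theorem ωSup_eq_inl (c : Chain (α ⊕ β)) (a₀ : α) (h : c 0 = Sum.inl a₀) :
    ωSup c = Sum.inl (ωSup (leftChain c a₀ h)) := by
  show (match h' : c 0 with
    | Sum.inl a₀ => Sum.inl (ωSup (leftChain c a₀ h'))
    | Sum.inr b₀ => Sum.inr (ωSup (rightChain c b₀ h'))) = _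
  split
  · rename_i a₁ h₁
    have ha : a₁ = a₀ := by
      have := h₁.symm.trans h
      exact Sum.inl_injective this
    subst ha
    rfl
  · rename_i b₁ h₁
    have := h₁.symm.trans h
    simp at this

theorem ωSup_eq_inr (c : Chain (α ⊕ β)) (b₀ : β) (h : c 0 = Sum.inr b₀) :
    ωSup c = Sum.inr (ωSup (rightChain c b₀ h)) := by
  show (match h' : c 0 with
    | Sum.inl a₀ => Sum.inl (ωSup (leftChain c a₀ h'))
    | Sum.inr b₀ => Sum.inr (ωSup (rightChain c b₀ h'))) = _
  split
  · rename_i a₁ h₁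
    have := h₁.symm.trans h
    simp at this
  · rename_i b₁ h₁
    have hb : b₁ = b₀ := by
      have := h₁.symm.trans h
      exact Sum.inr_injective this
    subst hb
    rfl

end CPOSum

/-- An object of the category `CPO` of `ω`-complete partial orders
(posets with joins of increasing `ω`-chains) and continuous maps. -/
structure CPOCat : Type 1 where
  carrier : Type
  [str : OmegaCompletePartialOrder carrier]

attribute [instance] CPOCat.str

instance : CoeSort CPOCat Type := ⟨CPOCat.carrier⟩

/-- A cpo `A` as an object of `CPO`. -/
def CPOCat.of (A : Type) [OmegaCompletePartialOrder A] : CPOCat := ⟨A⟩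

/-- The binary coproduct in `CPO`: the disjoint union with elements of
different summands incomparable. -/
@[reducible] noncomputable def CPOCat.sum (X Y : CPOCat) : CPOCat := ⟨X.carrier ⊕ Y.carrier⟩

/-- Coproduct injection `inl` as a continuous map. -/
noncomputable def cpoInl {X Y : CPOCat} : X →𝒄 CPOCat.sum X Y where
  toFun := Sum.inl
  monotone' := Sum.inl_mono
  map_ωSup' := by
    intro c
    rw [CPOSum.ωSup_eq_inl (α := X.carrier) (β := Y.carrier) (c.map (⟨Sum.inl, Sum.inl_mono⟩ : X.carrier →o X.carrier ⊕ Y.carrier)) (c 0) rfl]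
    have hch : CPOSum.leftChain (c.map (⟨Sum.inl, Sum.inl_mono⟩ : X.carrier →o X.carrier ⊕ Y.carrier)) (c 0) rfl = c := by
      apply Chain.ext
      funext n
      exact CPOSum.leftChain_apply _ (c 0) rfl (i := n) (a := c n) rfl
    rw [hch]

/-- Coproduct injection `inr` as a continuous map. -/
noncomputable def cpoInr {X Y : CPOCat} : Y →𝒄 CPOCat.sum X Y where
  toFun := Sum.inr
  monotone' := Sum.inr_mono
  map_ωSup' := by
    intro c
    rw [CPOSum.ωSup_eq_inr (α := X.carrier) (β := Y.carrier) (c.map (⟨Sum.inr, Sum.inr_mono⟩ : Y.carrier →o X.carrier ⊕ Y.carrier)) (c 0) rfl]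
    have hch : CPOSum.rightChain (c.map (⟨Sum.inr, Sum.inr_mono⟩ : Y.carrier →o X.carrier ⊕ Y.carrier)) (c 0) rfl = c := by
      apply Chain.ext
      funext n
      exact CPOSum.rightChain_apply _ (c 0) rfl (i := n) (b := c n) rfl
    rw [hch]

/-- Copairing `[f, g]` of continuous maps, as a continuous map on the coproduct. -/
noncomputable def cpoElim {X Y Z : CPOCat} (f : X →𝒄 Z) (g : Y →𝒄 Z) :
    CPOCat.sum X Y →𝒄 Z where
  toFun := Sum.elim f g
  monotone' := by
    rintro (x | x) (y | y) h
    · exact f.monotone (Sum.inl_le_inl_iff.mp h)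
    · exact absurd h Sum.not_inl_le_inr
    · exact absurd h Sum.not_inr_le_inl
    · exact g.monotone (Sum.inr_le_inr_iff.mp h)
  map_ωSup' := by
    intro c
    rcases h : c 0 with a₀ | b₀
    · rw [CPOSum.ωSup_eq_inl c a₀ h]
      show f (ωSup (CPOSum.leftChain c a₀ h)) = _
      rw [f.continuous]
      apply congrArg
      apply Chain.ext
      funext n
      obtain ⟨a, ha⟩ := CPOSum.exists_inl c a₀ h n
      show f (CPOSum.leftChain c a₀ h n) = Sum.elim f g (c n)
      rw [CPOSum.leftChain_apply c a₀ h ha, ha]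
      rfl
    · rw [CPOSum.ωSup_eq_inr c b₀ h]
      show g (ωSup (CPOSum.rightChain c b₀ h)) = _
      rw [g.continuous]
      apply congrArg
      apply Chain.ext
      funext n
      obtain ⟨b, hb⟩ := CPOSum.exists_inr c b₀ h n
      show g (CPOSum.rightChain c b₀ h n) = Sum.elim f g (c n)
      rw [CPOSum.rightChain_apply c b₀ h hb, hb]
      rfl

/-- `f + g` on coproducts, as a continuous map. -/
noncomputable def cpoSumMap {X X' Y Y' : CPOCat} (f : X →𝒄 X') (g : Y →𝒄 Y') :
    CPOCat.sum X Y →𝒄 CPOCat.sum X' Y' :=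
  cpoElim (cpoInl.comp f) (cpoInr.comp g)

open OmegaCompletePartialOrder.ContinuousHom in
/-- A locally continuous endofunctor of `CPO`: the action on hom-cpos
`CPO(X, Y) → CPO(HX, HY)` is continuous (monotone and preserving suprema of
`ω`-chains of continuous maps). -/
structure CPOFunctor : Type 1 where
  obj : CPOCat → CPOCat
  map : ∀ {X Y : CPOCat}, (X →𝒄 Y) → (obj X →𝒄 obj Y)
  map_id : ∀ X : CPOCat, map (ContinuousHom.id : X →𝒄 X) = ContinuousHom.id
  map_comp : ∀ {X Y Z : CPOCat} (f : X →𝒄 Y) (g : Y →𝒄 Z),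
    map (g.comp f) = (map g).comp (map f)
  mono : ∀ {X Y : CPOCat} (f g : X →𝒄 Y), f ≤ g → map f ≤ map g
  cont : ∀ {X Y : CPOCat} (c : Chain (X →𝒄 Y)),
    map (ωSup c) = ωSup (c.map ⟨fun f => map f, fun _ _ h => mono _ _ h⟩)

/-- `s` is a solution of the flat equation morphism `e : X →𝒄 HX + A`:
`s = [α, id] ∘ (Hs + id) ∘ e`. -/
noncomputable def CPOSol (H : CPOFunctor) {A : Type} [OmegaCompletePartialOrder A]
    (α : H.obj (CPOCat.of A) →𝒄 CPOCat.of A) {X : CPOCat}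
    (e : X →𝒄 CPOCat.sum (H.obj X) (CPOCat.of A)) (s : X →𝒄 CPOCat.of A) : Prop :=
  s = (cpoElim (α.comp (H.map s)) ContinuousHom.id).comp e

/-- The map `F : s ↦ [α, id] ∘ (Hs + id) ∘ e` on `CPO(X, A)`. -/
noncomputable def cpoEqFun (H : CPOFunctor) {A : Type} [OmegaCompletePartialOrder A]
    (α : H.obj (CPOCat.of A) →𝒄 CPOCat.of A) {X : CPOCat}
    (e : X →𝒄 CPOCat.sum (H.obj X) (CPOCat.of A)) (s : X →𝒄 CPOCat.of A) :
    X →𝒄 CPOCat.of A :=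
  (cpoElim (α.comp (H.map s)) ContinuousHom.id).comp e

/-- The approximations `e†₀ = const ⊥`, `e†_{n+1} = F (e†_n)`. -/
noncomputable def cpoIter (H : CPOFunctor) {A : Type} [OmegaCompletePartialOrder A]
    [OrderBot A] (α : H.obj (CPOCat.of A) →𝒄 CPOCat.of A) {X : CPOCat}
    (e : X →𝒄 CPOCat.sum (H.obj X) (CPOCat.of A)) : ℕ → (X →𝒄 CPOCat.of A)
  | 0 => ContinuousHom.const (⊥ : A)
  | n + 1 => cpoEqFun H α e (cpoIter H α e n)

/-- The combined flat equation morphism `f ⊞ e = (can + id) ∘ (id + f) ∘ [e, inr]`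
in `CPO`. -/
noncomputable def cpoPlus (H : CPOFunctor) {X Y : CPOCat} {A : Type}
    [OmegaCompletePartialOrder A]
    (e : X →𝒄 CPOCat.sum (H.obj X) Y)
    (f : Y →𝒄 CPOCat.sum (H.obj Y) (CPOCat.of A)) :
    CPOCat.sum X Y →𝒄 CPOCat.sum (H.obj (CPOCat.sum X Y)) (CPOCat.of A) :=
  let yPart : Y →𝒄 CPOCat.sum (H.obj (CPOCat.sum X Y)) (CPOCat.of A) :=
    (cpoSumMap (H.map cpoInr) ContinuousHom.id).comp f
  cpoElim ((cpoElim (cpoInl.comp (H.map cpoInl)) yPart).comp e) yPart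

/-- A complete Elgot algebra in `CPO`: chosen solutions of all flat equation
morphisms, satisfying functoriality and compositionality. -/
structure CPOCompleteElgot (H : CPOFunctor) (A : Type)
    [OmegaCompletePartialOrder A]
    (α : H.obj (CPOCat.of A) →𝒄 CPOCat.of A) : Type 1 where
  sol : ∀ (X : CPOCat), (X →𝒄 CPOCat.sum (H.obj X) (CPOCat.of A)) → (X →𝒄 CPOCat.of A)
  isSol : ∀ (X : CPOCat) (e : X →𝒄 CPOCat.sum (H.obj X) (CPOCat.of A)),
    CPOSol H α e (sol X e)
  functorial : ∀ (X Y : CPOCat) (e : X →𝒄 CPOCat.sum (H.obj X) (CPOCat.of A))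
    (f : Y →𝒄 CPOCat.sum (H.obj Y) (CPOCat.of A)) (h : X →𝒄 Y),
    (cpoSumMap (H.map h) ContinuousHom.id).comp e = f.comp h →
      sol X e = (sol Y f).comp h
  compositional : ∀ (X Y : CPOCat) (e : X →𝒄 CPOCat.sum (H.obj X) Y)
    (f : Y →𝒄 CPOCat.sum (H.obj Y) (CPOCat.of A)),
    sol X ((cpoSumMap ContinuousHom.id (sol Y f)).comp e) =
      (sol (CPOCat.sum X Y) (cpoPlus H e f)).comp cpoInl

section LeastSolutions

open OmegaCompletePartialOrder
set_option linter.unusedSectionVars false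

variable {H : CPOFunctor} {A : Type} [OmegaCompletePartialOrder A] [OrderBot A]
  {α : H.obj (CPOCat.of A) →𝒄 CPOCat.of A}

/-- Evaluation at a point, as an order hom. -/
def cpoEv {X Y : CPOCat} (x : X) : (X →𝒄 Y) →o Y := ⟨fun f => f x, fun _ _ h => h x⟩

theorem cpoOmegaSup_apply {X Y : CPOCat} (c : Chain (X →𝒄 Y)) (x : X) :
    ωSup c x = ωSup (c.map (cpoEv x)) := rfl

theorem ωSup_const {Y : Type} [OmegaCompletePartialOrder Y] (c : Chain Y) (a : Y)
    (h : ∀ n, c n = a) : ωSup c = a :=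
  le_antisymm (ωSup_le _ _ fun n => (h n).le) ((h 0) ▸ le_ωSup c 0)

theorem cpoEqFun_apply {X : CPOCat} (e : X →𝒄 CPOCat.sum (H.obj X) (CPOCat.of A))
    (s : X →𝒄 CPOCat.of A) (x : X) :
    cpoEqFun H α e s x = Sum.elim (fun z => α (H.map s z)) (fun a => a) (e x) := rfl

theorem cpoSol_iff {X : CPOCat} (e : X →𝒄 CPOCat.sum (H.obj X) (CPOCat.of A))
    (s : X →𝒄 CPOCat.of A) : CPOSol H α e s ↔ s = cpoEqFun H α e s := Iff.rfl

theorem cpoEqFun_mono {X : CPOCat} (e : X →𝒄 CPOCat.sum (H.obj X) (CPOCat.of A)) :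
    Monotone (cpoEqFun H α e) := by
  intro s t hst x
  show cpoEqFun H α e s x ≤ cpoEqFun H α e t x
  rw [cpoEqFun_apply, cpoEqFun_apply]
  cases e x with
  | inl z => exact α.monotone (H.mono s t hst z)
  | inr a => exact le_rfl

theorem cpoIter_le_succ {X : CPOCat} (e : X →𝒄 CPOCat.sum (H.obj X) (CPOCat.of A)) :
    ∀ n, cpoIter H α e n ≤ cpoIter H α e (n + 1)
  | 0 => fun _ => by exact (bot_le : (⊥ : A) ≤ _)
  | n + 1 => cpoEqFun_mono e (cpoIter_le_succ e n)

/-- The chain of approximations of the least solution. -/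
noncomputable def cpoIterChain {X : CPOCat} (e : X →𝒄 CPOCat.sum (H.obj X) (CPOCat.of A)) :
    Chain (X →𝒄 CPOCat.of A) :=
  ⟨cpoIter H α e, monotone_nat_of_le_succ (cpoIter_le_succ e)⟩

/-- The least solution of a flat equation morphism. -/
noncomputable def cpoLSol {X : CPOCat} (e : X →𝒄 CPOCat.sum (H.obj X) (CPOCat.of A)) :
    X →𝒄 CPOCat.of A :=
  ωSup (cpoIterChain (α := α) e)

theorem cpoEqFun_cont {X : CPOCat} (e : X →𝒄 CPOCat.sum (H.obj X) (CPOCat.of A))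
    (c : Chain (X →𝒄 CPOCat.of A)) :
    cpoEqFun H α e (ωSup c) = ωSup (c.map ⟨cpoEqFun H α e, cpoEqFun_mono e⟩) := by
  apply ContinuousHom.ext
  intro x
  rw [cpoOmegaSup_apply, cpoEqFun_apply]
  cases hx : e x with
  | inl z =>
    show α (H.map (ωSup c) z) = _
    rw [H.cont, cpoOmegaSup_apply, α.continuous]
    congr 1
    apply Chain.ext
    funext n
    show α (H.map (c n) z) = cpoEqFun H α e (c n) x
    rw [cpoEqFun_apply, hx]
    rfl
  | inr a =>
    show a = _
    refine (ωSup_const _ a fun n => ?_).symm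
    show cpoEqFun H α e (c n) x = a
    rw [cpoEqFun_apply, hx]
    rfl

theorem cpoLSol_isSol {X : CPOCat} (e : X →𝒄 CPOCat.sum (H.obj X) (CPOCat.of A)) :
    CPOSol H α e (cpoLSol (α := α) e) := by
  rw [cpoSol_iff]
  show ωSup (cpoIterChain e) = cpoEqFun H α e (ωSup (cpoIterChain e))
  rw [cpoEqFun_cont]
  apply le_antisymm
  · refine ωSup_le _ _ fun n => le_trans (cpoIter_le_succ e n) ?_
    exact le_ωSup ((cpoIterChain e).map ⟨cpoEqFun H α e, cpoEqFun_mono e⟩) n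
  · refine ωSup_le _ _ fun n => ?_
    exact le_ωSup (cpoIterChain (α := α) e) (n + 1)

theorem cpoIter_le_sol {X : CPOCat} (e : X →𝒄 CPOCat.sum (H.obj X) (CPOCat.of A))
    (t : X →𝒄 CPOCat.of A) (ht : CPOSol H α e t) :
    ∀ n, cpoIter H α e n ≤ t
  | 0 => fun _ => by exact (bot_le : (⊥ : A) ≤ _)
  | n + 1 => le_trans (cpoEqFun_mono e (cpoIter_le_sol e t ht n))
      (le_of_eq ((cpoSol_iff e t).mp ht).symm)

theorem cpoLSol_least {X : CPOCat} (e : X →𝒄 CPOCat.sum (H.obj X) (CPOCat.of A))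
    (t : X →𝒄 CPOCat.of A) (ht : CPOSol H α e t) : cpoLSol (α := α) e ≤ t :=
  ωSup_le _ _ fun n => cpoIter_le_sol e t ht n

theorem cpoIter_comp {X Y : CPOCat} (e : X →𝒄 CPOCat.sum (H.obj X) (CPOCat.of A))
    (f : Y →𝒄 CPOCat.sum (H.obj Y) (CPOCat.of A)) (h : X →𝒄 Y)
    (hyp : (cpoSumMap (H.map h) ContinuousHom.id).comp e = f.comp h) :
    ∀ n, cpoIter H α e n = (cpoIter H α f n).comp h
  | 0 => ContinuousHom.ext _ _ fun _ => rfl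
  | n + 1 => by
    apply ContinuousHom.ext
    intro x
    have hx : (cpoSumMap (H.map h) ContinuousHom.id) (e x) = f (h x) :=
      DFunLike.congr_fun hyp x
    show cpoEqFun H α e (cpoIter H α e n) x = cpoEqFun H α f (cpoIter H α f n) (h x)
    rw [cpoEqFun_apply, cpoEqFun_apply, cpoIter_comp e f h hyp n]
    cases he : e x with
    | inl z =>
      have hfx : f (h x) = Sum.inl (H.map h z) := by rw [← hx, he]; rfl
      rw [hfx]
      show α (H.map ((cpoIter H α f n).comp h) z) = α (H.map (cpoIter H α f n) (H.map h z))
      rw [H.map_comp]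
      rfl
    | inr a =>
      have hfx : f (h x) = Sum.inr a := by rw [← hx, he]; rfl
      rw [hfx]
      rfl

theorem cpoLSol_functorial {X Y : CPOCat} (e : X →𝒄 CPOCat.sum (H.obj X) (CPOCat.of A))
    (f : Y →𝒄 CPOCat.sum (H.obj Y) (CPOCat.of A)) (h : X →𝒄 Y)
    (hyp : (cpoSumMap (H.map h) ContinuousHom.id).comp e = f.comp h) :
    cpoLSol (α := α) e = (cpoLSol (α := α) f).comp h := by
  apply ContinuousHom.ext
  intro x
  show ωSup (cpoIterChain e) x = ωSup (cpoIterChain f) (h x)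
  rw [cpoOmegaSup_apply, cpoOmegaSup_apply]
  congr 1
  apply Chain.ext
  funext n
  show cpoIter H α e n x = cpoIter H α f n (h x)
  rw [cpoIter_comp e f h hyp n]
  rfl

end LeastSolutions

section Compositional

open OmegaCompletePartialOrder
set_option linter.unusedSectionVars false

variable {H : CPOFunctor} {A : Type} [OmegaCompletePartialOrder A] [OrderBot A]
  {α : H.obj (CPOCat.of A) →𝒄 CPOCat.of A}

theorem cpoElim_inl {X Y Z : CPOCat} (f : X →𝒄 Z) (g : Y →𝒄 Z) (x : X) :
    cpoElim f g (Sum.inl x) = f x := rfl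

theorem cpoElim_inr {X Y Z : CPOCat} (f : X →𝒄 Z) (g : Y →𝒄 Z) (y : Y) :
    cpoElim f g (Sum.inr y) = g y := rfl

theorem cpoComp_apply {X Y Z : CPOCat} (f : Y →𝒄 Z) (g : X →𝒄 Y) (x : X) :
    f.comp g x = f (g x) := rfl

theorem cpoSumMap_inl {X X' Y Y' : CPOCat} (p : X →𝒄 X') (q : Y →𝒄 Y') (x : X) :
    cpoSumMap p q (Sum.inl x) = Sum.inl (p x) := rfl

theorem cpoSumMap_inr {X X' Y Y' : CPOCat} (p : X →𝒄 X') (q : Y →𝒄 Y') (y : Y) :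
    cpoSumMap p q (Sum.inr y) = Sum.inr (q y) := rfl

theorem cpoPlus_inl {X Y : CPOCat} (e : X →𝒄 CPOCat.sum (H.obj X) Y)
    (f : Y →𝒄 CPOCat.sum (H.obj Y) (CPOCat.of A)) (x : X) :
    cpoPlus H e f (Sum.inl x) =
      Sum.elim (fun z => Sum.inl (H.map (cpoInl (X := X) (Y := Y)) z))
        (fun y => cpoSumMap (H.map (cpoInr (X := X) (Y := Y))) ContinuousHom.id (f y))
        (e x) := rfl

theorem cpoPlus_inr {X Y : CPOCat} (e : X →𝒄 CPOCat.sum (H.obj X) Y)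
    (f : Y →𝒄 CPOCat.sum (H.obj Y) (CPOCat.of A)) (y : Y) :
    cpoPlus H e f (Sum.inr y) =
      cpoSumMap (H.map (cpoInr (X := X) (Y := Y))) ContinuousHom.id (f y) := rfl

theorem cpoSol_apply {X : CPOCat} (e : X →𝒄 CPOCat.sum (H.obj X) (CPOCat.of A))
    (s : X →𝒄 CPOCat.of A) (hs : CPOSol H α e s) (x : X) :
    s x = Sum.elim (fun z => α (H.map s z)) (fun a => a) (e x) := by
  conv_lhs => rw [(cpoSol_iff e s).mp hs]
  exact cpoEqFun_apply e s x

theorem cpoLSol_compositional {X Y : CPOCat} (e : X →𝒄 CPOCat.sum (H.obj X) Y)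
    (f : Y →𝒄 CPOCat.sum (H.obj Y) (CPOCat.of A)) :
    cpoLSol (α := α) ((cpoSumMap ContinuousHom.id (cpoLSol (α := α) f)).comp e) =
      (cpoLSol (α := α) (cpoPlus H e f)).comp cpoInl := by
  set fd := cpoLSol (α := α) f with hfd
  set e' := (cpoSumMap ContinuousHom.id fd).comp e with he'def
  set g := cpoPlus H e f with hg
  set s := cpoLSol (α := α) e' with hsdef
  set w := cpoLSol (α := α) g with hwdef
  have hsolf : CPOSol H α f fd := cpoLSol_isSol f
  have hsole' : CPOSol H α e' s := cpoLSol_isSol e'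
  have hsolw : CPOSol H α g w := cpoLSol_isSol g
  have he'inl : ∀ (x : X.carrier) z, e x = Sum.inl z → e' x = Sum.inl z := by
    intro x z hx
    rw [he'def, cpoComp_apply, hx, cpoSumMap_inl]
    rfl
  have he'inr : ∀ (x : X.carrier) (y : Y.carrier), e x = Sum.inr y →
      e' x = Sum.inr (fd y) := by
    intro x y hx
    rw [he'def, cpoComp_apply, hx, cpoSumMap_inr]
  have hmor : (cpoSumMap (H.map (cpoInr (X := X) (Y := Y))) ContinuousHom.id).comp f
      = g.comp cpoInr := ContinuousHom.ext _ _ fun _ => rfl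
  have hfw : fd = w.comp (cpoInr (X := X) (Y := Y)) :=
    cpoLSol_functorial f g cpoInr hmor
  have hui : (cpoElim s fd).comp (cpoInl (X := X) (Y := Y)) = s :=
    ContinuousHom.ext _ _ fun _ => rfl
  have hur : (cpoElim s fd).comp (cpoInr (X := X) (Y := Y)) = fd :=
    ContinuousHom.ext _ _ fun _ => rfl
  have hkey : ∀ (u : CPOCat.sum X Y →𝒄 CPOCat.of A) (y : Y.carrier),
      Sum.elim (fun z => α (H.map u z)) (fun a => a)
        (cpoSumMap (H.map (cpoInr (X := X) (Y := Y))) ContinuousHom.id (f y))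
        = cpoEqFun H α f (u.comp cpoInr) y := by
    intro u y
    rw [cpoEqFun_apply]
    cases hfy : f y with
    | inl hy =>
      rw [cpoSumMap_inl]
      simp only [Sum.elim_inl]
      rw [H.map_comp]
      rfl
    | inr a =>
      rw [cpoSumMap_inr]
      simp only [Sum.elim_inr]
      rfl
  have hA : CPOSol H α g (cpoElim s fd) := by
    rw [cpoSol_iff]
    apply ContinuousHom.ext
    intro v
    rw [cpoEqFun_apply, hg]
    cases v with
    | inl x =>
      rw [cpoElim_inl, cpoPlus_inl]
      cases hex : e x with
      | inl z =>
        simp only [Sum.elim_inl]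
        rw [cpoSol_apply e' s hsole' x, he'inl x z hex]
        simp only [Sum.elim_inl]
        conv_lhs => rw [← hui]
        rw [H.map_comp]
        rfl
      | inr y =>
        simp only [Sum.elim_inr]
        rw [hkey (cpoElim s fd) y, hur]
        rw [cpoSol_apply e' s hsole' x, he'inr x y hex]
        simp only [Sum.elim_inr]
        exact DFunLike.congr_fun ((cpoSol_iff f fd).mp hsolf) y
    | inr y =>
      rw [cpoElim_inr, cpoPlus_inr, hkey (cpoElim s fd) y, hur]
      exact DFunLike.congr_fun ((cpoSol_iff f fd).mp hsolf) y
  have hB : CPOSol H α e' (w.comp cpoInl) := by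
    rw [cpoSol_iff]
    apply ContinuousHom.ext
    intro x
    rw [cpoEqFun_apply]
    have hstep : (w.comp cpoInl) x = w (Sum.inl x) := rfl
    rw [hstep, cpoSol_apply g w hsolw (Sum.inl x), hg, cpoPlus_inl]
    cases hex : e x with
    | inl z =>
      simp only [Sum.elim_inl]
      rw [he'inl x z hex]
      simp only [Sum.elim_inl]
      rw [H.map_comp]
      rfl
    | inr y =>
      simp only [Sum.elim_inr]
      rw [hkey w y, ← hfw, he'inr x y hex]
      simp only [Sum.elim_inr]
      exact (DFunLike.congr_fun ((cpoSol_iff f fd).mp hsolf) y).symm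
  apply le_antisymm
  · exact cpoLSol_least e' (w.comp cpoInl) hB
  · intro x
    exact cpoLSol_least g (cpoElim s fd) hA (Sum.inl x)

end Compositional

/-- Let `H : CPO → CPO` be locally continuous and `α : HA →𝒄 A` an `H`-algebra
with least element.  Then `(A, α)` together with the assignment of least
solutions is a complete Elgot algebra: the least-solution assignment is
functorial and compositional. -/
theorem cpo_least_solutions_complete_elgot (H : CPOFunctor) (A : Type)
    [OmegaCompletePartialOrder A] [OrderBot A]
    (α : H.obj (CPOCat.of A) →𝒄 CPOCat.of A) :
    ∃ E : CPOCompleteElgot H A α,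
      ∀ (X : CPOCat) (e : X →𝒄 CPOCat.sum (H.obj X) (CPOCat.of A)),
        IsLeast {t | CPOSol H α e t} (E.sol X e) := by
  exact ⟨⟨fun X e => cpoLSol (α := α) e,
      fun X e => cpoLSol_isSol e,
      fun X Y e f h hyp => cpoLSol_functorial e f h hyp,
      fun X Y e f => cpoLSol_compositional e f⟩,
    fun X e => ⟨cpoLSol_isSol e, fun t ht => cpoLSol_least e t ht⟩⟩
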